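/- Let M be a matroid, and suppose P ⊆ E(M) contains no triangle of M and admits a partition (L_1, ..., L_t) into pairs, for some t ≥ 3, such that L_i ∪ L_j is a cocircuit for all distinct i, j ∈ {1,...,t} except possibly {i,j} = {1,2}. If a triangle T of M meets some L_i, then L_i ⊆ T. -/
import Mathlib


open Set Matroid

namespace NDP

variable {α : Type*}

/-- The rank of a set in a matroid: the supremum of sizes of independent subsets. -/
noncomputable def rk (M : Matroid α) (X : Set α) : ℕ :=
  sSup {n | ∃ I, M.Indep I ∧ I ⊆ X ∧ I.ncard = n}

/-- A circuit: a minimal dependent subset of the ground set. -/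
def Circuit (M : Matroid α) (C : Set α) : Prop :=
  C ⊆ M.E ∧ ¬ M.Indep C ∧ ∀ x ∈ C, M.Indep (C \ {x})

/-- A cocircuit: a circuit of the dual matroid. -/
def Cocircuit (M : Matroid α) (C : Set α) : Prop := Circuit M✶ C

/-- Deletion of a set of elements. -/
def delete (M : Matroid α) (D : Set α) : Matroid α := M ↾ (M.E \ D)

/-- Contraction of a set of elements. -/
def contract (M : Matroid α) (C : Set α) : Matroid α := (delete M✶ C)✶

/-- The connectivity function `λ_M(X) = r(X) + r(E − X) − r(M)`. -/
noncomputable def lambda (M : Matroid α) (X : Set α) : ℤ :=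
  (rk M X : ℤ) + (rk M (M.E \ X) : ℤ) - (rk M M.E : ℤ)

/-- `S` gives a `k`-separation `(S, E − S)` of `M`. -/
def IsKSeparation (M : Matroid α) (k : ℕ) (S : Set α) : Prop :=
  S ⊆ M.E ∧ lambda M S ≤ (k : ℤ) - 1 ∧ k ≤ S.ncard ∧ k ≤ (M.E \ S).ncard

/-- A matroid is connected (2-connected) if it has no 1-separation. -/
def Connected (M : Matroid α) : Prop := ∀ S, ¬ IsKSeparation M 1 S

/-- A matroid is 3-connected if it has no `k`-separation for `k < 3`. -/
def ThreeConnected (M : Matroid α) : Prop := ∀ k < 3, ∀ S, ¬ IsKSeparation M k S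

/-- Isomorphism of two matroids on the same type. -/
def Iso (M N : Matroid α) : Prop :=
  ∃ e : M.E ≃ N.E,
    ∀ I : Set M.E, M.Indep (Subtype.val '' I) ↔ N.Indep (Subtype.val '' (e '' I))

/-- `N` is a minor of `M`. -/
def IsMinor (N M : Matroid α) : Prop :=
  ∃ C D : Set α, C ⊆ M.E ∧ D ⊆ M.E ∧ Disjoint C D ∧ N = delete (contract M C) D

/-- `M` has a minor isomorphic to `N`. -/
def HasMinorIso (M N : Matroid α) : Prop := ∃ M', IsMinor M' M ∧ Iso M' N

/-- `N` is a simplification of `M`: the restriction of `M` to a set of representatives,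
one from each parallel class of nonloop elements. -/
def IsSimplification (M N : Matroid α) : Prop :=
  ∃ X ⊆ M.E, N = M ↾ X ∧
    (∀ e ∈ X, M.Indep {e}) ∧
    (∀ e f, e ∈ X → f ∈ X → e ∈ M.closure {f} → e = f) ∧
    (∀ e ∈ M.E, M.Indep {e} → ∃ f ∈ X, e ∈ M.closure {f})

/-- `si M` is 3-connected. -/
def SiThreeConnected (M : Matroid α) : Prop :=
  ∀ N, IsSimplification M N → ThreeConnected N

/-- `co M` is 3-connected; the cosimplification is the dual of the simplification of the dual. -/
def CoThreeConnected (M : Matroid α) : Prop :=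
  ∀ N, IsSimplification M✶ N → ThreeConnected N✶

end NDP

/-- Orthogonality: a circuit and a cocircuit cannot meet in exactly one element. -/
lemma orth_aux {α : Type*} {M : Matroid α} {C D : Set α} (hC : NDP.Circuit M C)
    (hD : NDP.Circuit M✶ D) {e : α} (heC : e ∈ C) (heD : e ∈ D) :
    ∃ f, f ≠ e ∧ f ∈ C ∧ f ∈ D := by
  by_contra hcon
  push_neg at hcon
  have hCE : C ⊆ M.E := hC.1
  have hDE : D ⊆ M.E := hD.1
  have hCe : M.Indep (C \ {e}) := hC.2.2 e heC
  have hecl : e ∈ M.closure (C \ {e}) := by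
    rw [hCe.mem_closure_iff_of_notMem (by simp), insert_diff_singleton,
      insert_eq_of_mem heC, dep_iff]
    exact ⟨hC.2.1, hCE⟩
  have hsub : C \ {e} ⊆ M.E \ D := fun f hf =>
    ⟨hCE hf.1, hcon f hf.2 hf.1⟩
  have hecl2 : e ∈ M.closure (M.E \ D) :=
    M.closure_subset_closure hsub hecl
  have hDco : M.Coindep (D \ {e}) := hD.2.2 e heD
  have hgr : M.closure (M.E \ (D \ {e})) = M.E := hDco.closure_compl
  have hEeq : M.E \ (D \ {e}) = insert e (M.E \ D) := by
    ext x
    by_cases hx : x = e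
    · subst hx; simp [hDE heD]
    · simp only [mem_diff, mem_singleton_iff, mem_insert_iff, hx, false_or]
      tauto
  have hclE : M.closure (M.E \ D) = M.E := by
    rw [← closure_insert_eq_of_mem_closure hecl2, ← hEeq, hgr]
  have hDco' : M.Coindep D := by
    rw [coindep_iff_closure_compl_eq_ground hDE]
    exact hclE
  exact hD.2.1 hDco'

/-- If `P` contains no triangle and is partitioned into pairs `L_1, ..., L_t`
(`t ≥ 3`) with `L_i ∪ L_j` a cocircuit for all distinct `i, j` except possibly
`{i,j} = {1,2}`, then any triangle meeting some `L_i` contains `L_i`. -/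
theorem statement_7 {α : Type*} (M : Matroid α) [M.Finite] (P : Set α) (hPE : P ⊆ M.E)
    (t : ℕ) (ht : 3 ≤ t) (L : Fin t → Set α)
    (hunion : ⋃ i, L i = P)
    (hdisj : ∀ i j, i ≠ j → Disjoint (L i) (L j))
    (hpair : ∀ i, (L i).ncard = 2)
    (hcc : ∀ i j : Fin t, i ≠ j →
      ({i, j} : Set (Fin t)) ≠ {(⟨0, by omega⟩ : Fin t), (⟨1, by omega⟩ : Fin t)} →
      NDP.Cocircuit M (L i ∪ L j))
    (hnotri : ¬ ∃ T ⊆ P, NDP.Circuit M T ∧ T.ncard = 3)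
    (T : Set α) (hT : NDP.Circuit M T) (hT3 : T.ncard = 3)
    (i : Fin t) (hmeet : (T ∩ L i).Nonempty) :
    L i ⊆ T := by
  classical
  have hLP : ∀ j, L j ⊆ P := by intro j; rw [← hunion]; exact subset_iUnion L j
  obtain ⟨x, hxT, hxL⟩ := hmeet
  intro z hz
  by_contra hzT
  have hxz : x ≠ z := fun h => hzT (h ▸ hxT)
  -- any element of T in L i equals x
  have hTLi : ∀ f, f ∈ T → f ∈ L i → f = x := by
    intro f hfT hfL
    by_contra hfx
    have h3 : ({x, z, f} : Set α) ⊆ L i := by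
      simp only [insert_subset_iff, singleton_subset_iff]
      exact ⟨hxL, hz, hfL⟩
    have hfz : f ≠ z := fun h => hzT (h ▸ hfT)
    have h3card : ({x, z, f} : Set α).ncard = 3 :=
      Set.ncard_eq_three.mpr ⟨x, z, f, hxz, Ne.symm hfx, Ne.symm hfz, rfl⟩
    have hle := Set.ncard_le_ncard h3 (Set.finite_of_ncard_ne_zero (by rw [hpair i]; omega))
    rw [h3card, hpair i] at hle
    omega
  have i0 : Fin t := ⟨0, by omega⟩
  -- step: each valid index j gives an element of T in L j
  have hstep : ∀ j : Fin t, i ≠ j → ({i, j} : Set (Fin t)) ≠ {⟨0, by omega⟩, ⟨1, by omega⟩} →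
      ∃ c, c ∈ T ∧ c ∈ L j := by
    intro j hij hne
    obtain ⟨f, hfx, hfT, hfD⟩ := orth_aux hT (hcc i j hij hne) hxT (Or.inl hxL : x ∈ L i ∪ L j)
    rcases hfD with hfLi | hfLj
    · exact absurd (hTLi f hfT hfLi) hfx
    · exact ⟨f, hfT, hfLj⟩
  have key : ∃ c d, c ≠ d ∧ c ∈ T ∧ d ∈ T ∧ c ∈ P \ L i ∧ d ∈ P \ L i := by
    by_cases hi01 : i = (⟨0, by omega⟩ : Fin t) ∨ i = (⟨1, by omega⟩ : Fin t)
    · -- i is one of the first two indices; use L 2 and the other of L 0, L 1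
      have hj2i : i ≠ (⟨2, by omega⟩ : Fin t) := by
        rcases hi01 with h | h <;> subst h <;> simp [Fin.ext_iff]
      have hne2 : ({i, (⟨2, by omega⟩ : Fin t)} : Set (Fin t)) ≠
          {(⟨0, by omega⟩ : Fin t), (⟨1, by omega⟩ : Fin t)} := by
        intro h
        have h2 : (⟨2, by omega⟩ : Fin t) ∈ ({i, (⟨2, by omega⟩ : Fin t)} : Set (Fin t)) :=
          Or.inr rfl
        rw [h] at h2
        rcases h2 with h' | h' <;> simp [Fin.ext_iff] at h'
      obtain ⟨c, hcT, hcL⟩ := hstep _ hj2i hne2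
      obtain ⟨k, hki, hk01⟩ : ∃ k : Fin t,
          k ≠ i ∧ (k = (⟨0, by omega⟩ : Fin t) ∨ k = (⟨1, by omega⟩ : Fin t)) := by
        rcases hi01 with h | h
        · exact ⟨⟨1, by omega⟩, by rw [h]; simp [Fin.ext_iff], Or.inr rfl⟩
        · exact ⟨⟨0, by omega⟩, by rw [h]; simp [Fin.ext_iff], Or.inl rfl⟩
      have hkj2 : k ≠ (⟨2, by omega⟩ : Fin t) := by
        rcases hk01 with h | h <;> subst h <;> simp [Fin.ext_iff]
      have hnek : ({k, (⟨2, by omega⟩ : Fin t)} : Set (Fin t)) ≠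
          {(⟨0, by omega⟩ : Fin t), (⟨1, by omega⟩ : Fin t)} := by
        intro h
        have h2 : (⟨2, by omega⟩ : Fin t) ∈ ({k, (⟨2, by omega⟩ : Fin t)} : Set (Fin t)) :=
          Or.inr rfl
        rw [h] at h2
        rcases h2 with h' | h' <;> simp [Fin.ext_iff] at h'
      obtain ⟨d, hdc, hdT, hdD⟩ :=
        orth_aux hT (hcc k _ hkj2 hnek) hcT (Or.inr hcL : c ∈ L k ∪ L _)
      have hcP : c ∈ P \ L i :=
        ⟨hLP _ hcL, fun h => Set.disjoint_left.mp (hdisj i _ hj2i) h hcL⟩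
      have hdP : d ∈ P \ L i := by
        rcases hdD with h | h
        · exact ⟨hLP _ h, fun h' => Set.disjoint_left.mp (hdisj i k (Ne.symm hki)) h' h⟩
        · exact ⟨hLP _ h, fun h' => Set.disjoint_left.mp (hdisj i _ hj2i) h' h⟩
      exact ⟨c, d, Ne.symm hdc, hcT, hdT, hcP, hdP⟩
    · push_neg at hi01
      obtain ⟨hi0, hi1⟩ := hi01
      have hne0 : ({i, (⟨0, by omega⟩ : Fin t)} : Set (Fin t)) ≠
          {(⟨0, by omega⟩ : Fin t), (⟨1, by omega⟩ : Fin t)} := by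
        intro h
        have h2 : i ∈ ({i, (⟨0, by omega⟩ : Fin t)} : Set (Fin t)) := Or.inl rfl
        rw [h] at h2
        rcases h2 with h' | h' <;> [exact hi0 h'; exact hi1 h']
      have hne1 : ({i, (⟨1, by omega⟩ : Fin t)} : Set (Fin t)) ≠
          {(⟨0, by omega⟩ : Fin t), (⟨1, by omega⟩ : Fin t)} := by
        intro h
        have h2 : i ∈ ({i, (⟨1, by omega⟩ : Fin t)} : Set (Fin t)) := Or.inl rfl
        rw [h] at h2
        rcases h2 with h' | h' <;> [exact hi0 h'; exact hi1 h']
      obtain ⟨c, hcT, hcL⟩ := hstep _ hi0 hne0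
      obtain ⟨d, hdT, hdL⟩ := hstep _ hi1 hne1
      have h01 : (⟨0, by omega⟩ : Fin t) ≠ (⟨1, by omega⟩ : Fin t) := by simp [Fin.ext_iff]
      refine ⟨c, d, fun h => Set.disjoint_left.mp (hdisj _ _ h01) hcL (h ▸ hdL), hcT, hdT,
        ⟨hLP _ hcL, fun h' => Set.disjoint_left.mp (hdisj i _ hi0) h' hcL⟩,
        ⟨hLP _ hdL, fun h' => Set.disjoint_left.mp (hdisj i _ hi1) h' hdL⟩⟩
  obtain ⟨c, d, hcd, hcT, hdT, ⟨hcP, hcLi⟩, ⟨hdP, hdLi⟩⟩ := key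
  have hxc : x ≠ c := fun h => hcLi (h ▸ hxL)
  have hxd : x ≠ d := fun h => hdLi (h ▸ hxL)
  have hsub : ({x, c, d} : Set α) ⊆ T := by
    simp only [insert_subset_iff, Set.singleton_subset_iff]
    exact ⟨hxT, hcT, hdT⟩
  have hcard : ({x, c, d} : Set α).ncard = 3 :=
    Set.ncard_eq_three.mpr ⟨x, c, d, hxc, hxd, hcd, rfl⟩
  have hTfin : T.Finite := M.ground_finite.subset hT.1
  have hTeq : ({x, c, d} : Set α) = T :=
    Set.eq_of_subset_of_ncard_le hsub (by rw [hT3, hcard]) hTfin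
  apply hnotri
  refine ⟨T, ?_, hT, hT3⟩
  rw [← hTeq]
  simp only [insert_subset_iff, Set.singleton_subset_iff]
  exact ⟨hLP i hxL, hcP, hdP⟩
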